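/- Let $x_1 > x_2 > \dots > x_n$ with $x_i - x_{i+1} > c > 0$, define $|\psi_i|^2 = c\prod_{j\neq i}\frac{x_i - x_j + c}{x_i - x_j}$ and $|\lambda_i|^2 = c\prod_{j\neq i}\frac{x_j - x_i + c}{x_j - x_i}$. Then the real matrix $X$ with entries $X_{ij} = \frac{|\lambda_i||\psi_j|}{x_j - x_i + c}$ is orthogonal: $X X^t = I$. -/
import Mathlib

open Finset Polynomial in
lemma key_coeff_basis {ι : Type*} [DecidableEq ι] (s : Finset ι) (v : ι → ℝ)
    (hv : Set.InjOn v s) {i : ι} (hi : i ∈ s) :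
    (Lagrange.basis s v i).coeff (s.card - 1) = ∏ j ∈ s.erase i, (v i - v j)⁻¹ := by
  have hnd := Lagrange.natDegree_basis hv hi
  rw [← hnd, ← Polynomial.leadingCoeff, Lagrange.basis, Polynomial.leadingCoeff_prod]
  refine Finset.prod_congr rfl fun j hj => ?_
  rw [Lagrange.basisDivisor, leadingCoeff_mul, leadingCoeff_C,
    (monic_X_sub_C (v j)).leadingCoeff, mul_one]

open Finset Polynomial in
lemma key_sum_eval {ι : Type*} [DecidableEq ι] (s : Finset ι) (v : ι → ℝ)
    (hv : Set.InjOn v s) (P : Polynomial ℝ) (hdeg : P.degree < s.card) :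
    ∑ i ∈ s, P.eval (v i) * ∏ j ∈ s.erase i, (v i - v j)⁻¹ = P.coeff (s.card - 1) := by
  conv_rhs => rw [Lagrange.eq_interpolate hv hdeg]
  rw [Lagrange.interpolate_apply, Polynomial.finset_sum_coeff]
  exact (Finset.sum_congr rfl fun i hi => by
    rw [Polynomial.coeff_C_mul, key_coeff_basis s v hv hi]).symm

open Finset in
theorem X_orthogonal_on_generic_stratum (n : ℕ) (x : Fin n → ℝ) (c : ℝ) (hc : 0 < c)
    (hgap : ∀ i j : Fin n, (i : ℕ) + 1 = (j : ℕ) → x i - x j > c)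
    (ψ lam : Fin n → ℝ)
    (hψ : ∀ i, ψ i = Real.sqrt (c * ∏ j ∈ univ.erase i, (x i - x j + c) / (x i - x j)))
    (hlam : ∀ i, lam i = Real.sqrt (c * ∏ j ∈ univ.erase i, (x j - x i + c) / (x j - x i)))
    (X : Matrix (Fin n) (Fin n) ℝ)
    (hX : ∀ i j, X i j = lam i * ψ j / (x j - x i + c)) :
    X * X.transpose = 1 := by
  have hlt : ∀ i j : Fin n, i < j → c < x i - x j := by
    have step : ∀ (d : ℕ) (i j : Fin n), (i:ℕ) + d + 1 = (j:ℕ) → c < x i - x j := by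
      intro d
      induction d with
      | zero => exact fun i j h => hgap i j (by omega)
      | succ d ih =>
        intro i j h
        have hi' : (i:ℕ) + 1 < n := by have := j.isLt; omega
        have h1 := hgap i ⟨(i:ℕ)+1, hi'⟩ rfl
        have h2 := ih ⟨(i:ℕ)+1, hi'⟩ j (by simp; omega)
        linarith
    intro i j h
    exact step ((j:ℕ) - (i:ℕ) - 1) i j (by have := Fin.lt_def.mp h; omega)
  have hxinj : Function.Injective x := by
    intro a b hab
    rcases lt_trichotomy a b with h|h|h
    · exfalso; have := hlt a b h; rw [hab] at this; linarith
    · exact h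
    · exfalso; have := hlt b a h; rw [hab] at this; linarith
  have hsub : ∀ p q : Fin n, p ≠ q → x p - x q ≠ 0 :=
    fun p q h => sub_ne_zero_of_ne (fun e => h (hxinj e))
  have hD : ∀ p q : Fin n, x p - x q + c ≠ 0 := by
    intro p q h0
    rcases lt_trichotomy p q with h|h|h
    · have := hlt p q h; linarith
    · subst h; simp at h0; linarith
    · have := hlt q p h; linarith
  have hrat : ∀ p q : Fin n, q ≠ p → 0 < (x p - x q + c) / (x p - x q) := by
    intro p q hpq
    rcases lt_trichotomy p q with h|h|h
    · have := hlt p q h; exact div_pos (by linarith) (by linarith)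
    · exact absurd h.symm hpq
    · have := hlt q p h; exact div_pos_of_neg_of_neg (by linarith) (by linarith)
  have hψ2 : ∀ j, ψ j * ψ j = c * ∏ m ∈ univ.erase j, (x j - x m + c) / (x j - x m) := by
    intro j
    rw [hψ j]
    exact Real.mul_self_sqrt (mul_nonneg hc.le (Finset.prod_nonneg fun m hm =>
      (hrat j m (Finset.mem_erase.mp hm).1).le))
  have hlam2 : ∀ i, lam i * lam i = c * ∏ m ∈ univ.erase i, (x m - x i + c) / (x m - x i) := by
    intro i
    rw [hlam i]
    exact Real.mul_self_sqrt (mul_nonneg hc.le (Finset.prod_nonneg fun m hm =>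
      (hrat m i (Ne.symm (Finset.mem_erase.mp hm).1)).le))
  have hTnm : ∀ (p m : Fin n), x m ≠ x p - c := by
    intro p m h
    rcases lt_trichotomy m p with hh|hh|hh
    · have := hlt m p hh; linarith
    · subst hh; linarith
    · have := hlt p m hh; linarith
  have hnotmem : ∀ (p : Fin n) (t : Finset (Fin n)), x p - c ∉ t.image x := by
    intro p t h
    obtain ⟨m, -, hm⟩ := Finset.mem_image.mp h
    exact hTnm p m hm
  have himginj : ∀ (t : Finset (Fin n)), ∀ a ∈ t, ∀ b ∈ t, x a = x b → a = b :=
    fun t a _ b _ h => hxinj h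
  ext i k
  rw [Matrix.mul_apply]
  simp only [Matrix.transpose_apply, Matrix.one_apply]
  by_cases hik : i = k
  · subst hik
    rw [if_pos rfl]
    have hcard : (insert (x i - c) (univ.image x)).card = n + 1 := by
      rw [card_insert_of_notMem (hnotmem i univ),
        Finset.card_image_of_injOn (himginj univ), card_univ, Fintype.card_fin]
    have hdeg : (Lagrange.nodal (univ.erase i) (fun m => x m - c)).degree <
        (insert (x i - c) (univ.image x)).card := by
      rw [Lagrange.degree_nodal, hcard]
      have h1 : (univ.erase i).card < n + 1 := by
        rw [Finset.card_erase_of_mem (mem_univ i), card_univ, Fintype.card_fin]; omega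
      exact_mod_cast h1
    have hkey := key_sum_eval (insert (x i - c) (univ.image x)) id
      (Set.injOn_id _) (Lagrange.nodal (univ.erase i) (fun m => x m - c)) hdeg
    have hcoeff : (Lagrange.nodal (univ.erase i) (fun m => x m - c)).coeff
        ((insert (x i - c) (univ.image x)).card - 1) = 0 := by
      apply Polynomial.coeff_eq_zero_of_natDegree_lt
      rw [Lagrange.natDegree_nodal, hcard, Finset.card_erase_of_mem (mem_univ i),
        card_univ, Fintype.card_fin]
      have := i.pos
      omega
    rw [hcoeff] at hkey
    simp only [id_eq] at hkey
    rw [Finset.sum_insert (hnotmem i univ), Finset.sum_image (himginj univ),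
      Finset.erase_insert (hnotmem i univ), Finset.prod_image (himginj univ)] at hkey
    -- hkey : E + ∑ j, eval (x j) P * ∏ u ∈ (insert (x i - c) (univ.image x)).erase (x j), ... = 0
    have hstep : ∀ j : Fin n,
        Polynomial.eval (x j) (Lagrange.nodal (univ.erase i) (fun m => x m - c)) *
          ∏ u ∈ (insert (x i - c) (univ.image x)).erase (x j), (x j - u)⁻¹
        = Polynomial.eval (x j) (Lagrange.nodal (univ.erase i) (fun m => x m - c)) *
          ((x j - (x i - c))⁻¹ * ∏ m ∈ univ.erase j, (x j - x m)⁻¹) := by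
      intro j
      congr 1
      rw [Finset.erase_insert_of_ne (fun h => hTnm i j h.symm),
          ← Finset.image_erase hxinj,
          Finset.prod_insert (hnotmem i (univ.erase j)),
          Finset.prod_image (himginj (univ.erase j))]
    rw [Finset.sum_congr rfl (fun j _ => hstep j)] at hkey
    have hXj : ∀ j : Fin n, X i j * X i j = (lam i * lam i) *
        (Polynomial.eval (x j) (Lagrange.nodal (univ.erase i) (fun m => x m - c)) *
          ((x j - (x i - c))⁻¹ * ∏ m ∈ univ.erase j, (x j - x m)⁻¹)) := by
      intro j
      have hA : (x j - x i + c) * Polynomial.eval (x j)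
            (Lagrange.nodal (univ.erase i) (fun m => x m - c))
          = c * ∏ m ∈ univ.erase j, (x j - x m + c) := by
        rw [Lagrange.eval_nodal]
        have e1 : ∏ m ∈ univ.erase i, (x j - (x m - c)) = ∏ m ∈ univ.erase i, (x j - x m + c) :=
          Finset.prod_congr rfl fun m _ => by ring
        rw [e1, Finset.mul_prod_erase univ (fun m => x j - x m + c) (Finset.mem_univ i),
          ← Finset.mul_prod_erase univ (fun m => x j - x m + c) (Finset.mem_univ j)]
        ring
      have hψψ : ψ j * ψ j = (c * ∏ m ∈ univ.erase j, (x j - x m + c)) *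
          (∏ m ∈ univ.erase j, (x j - x m))⁻¹ := by
        rw [hψ2 j, Finset.prod_div_distrib, div_eq_mul_inv]
        ring
      have hd1 : x j - (x i - c) = x j - x i + c := by ring
      have hc1 : (x j - x i + c) * (x j - x i + c)⁻¹ = 1 := mul_inv_cancel₀ (hD j i)
      calc X i j * X i j
          = (lam i * lam i) * ((ψ j * ψ j) * ((x j - x i + c)⁻¹ * (x j - x i + c)⁻¹)) := by
            rw [hX]; ring
        _ = (lam i * lam i) * ((((x j - x i + c) *
              Polynomial.eval (x j) (Lagrange.nodal (univ.erase i) (fun m => x m - c))) *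
              (∏ m ∈ univ.erase j, (x j - x m))⁻¹) *
              ((x j - x i + c)⁻¹ * (x j - x i + c)⁻¹)) := by
            rw [hψψ, hA]
        _ = (lam i * lam i) *
              (Polynomial.eval (x j) (Lagrange.nodal (univ.erase i) (fun m => x m - c)) *
                ((x j - x i + c)⁻¹ * (∏ m ∈ univ.erase j, (x j - x m))⁻¹)) *
              ((x j - x i + c) * (x j - x i + c)⁻¹) := by ring
        _ = _ := by
            rw [hc1, mul_one, hd1, Finset.prod_inv_distrib]
    have hE : (lam i * lam i) *
        (Polynomial.eval (x i - c) (Lagrange.nodal (univ.erase i) (fun m => x m - c)) *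
          ∏ m : Fin n, ((x i - c) - x m)⁻¹) = -1 := by
      rw [hlam2 i, Lagrange.eval_nodal]
      have e1 : ∏ m ∈ univ.erase i, ((x i - c) - (x m - c)) = ∏ m ∈ univ.erase i, (x i - x m) :=
        Finset.prod_congr rfl fun m _ => by ring
      have e2 : ∏ m : Fin n, ((x i - c) - x m)⁻¹
          = (-c)⁻¹ * ∏ m ∈ univ.erase i, ((x i - c) - x m)⁻¹ := by
        rw [← Finset.mul_prod_erase univ (fun m => ((x i - c) - x m)⁻¹) (Finset.mem_univ i)]
        congr 2
        ring
      rw [e1, e2]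
      have hone : (∏ m ∈ univ.erase i, (x m - x i + c) / (x m - x i)) *
          ((∏ m ∈ univ.erase i, (x i - x m)) * (∏ m ∈ univ.erase i, ((x i - c) - x m)⁻¹)) = 1 := by
        rw [← Finset.prod_mul_distrib, ← Finset.prod_mul_distrib]
        apply Finset.prod_eq_one
        intro m hm
        have h1 := hD m i
        have h2 := hsub m i (Finset.mem_erase.mp hm).1
        have h3 : (x i - c) - x m = -(x m - x i + c) := by ring
        calc (x m - x i + c) / (x m - x i) * ((x i - x m) * ((x i - c) - x m)⁻¹)
            = ((x m - x i + c) * (x m - x i + c)⁻¹) * ((x m - x i) * (x m - x i)⁻¹) := by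
              rw [h3, inv_neg, div_eq_mul_inv]; ring
          _ = 1 := by rw [mul_inv_cancel₀ h1, mul_inv_cancel₀ h2, mul_one]
      have hcc : c * (-c)⁻¹ = -1 := by
        field_simp
      linear_combination (c * (-c)⁻¹) * hone + hcc
    calc ∑ j, X i j * X i j
        = ∑ j, (lam i * lam i) *
            (Polynomial.eval (x j) (Lagrange.nodal (univ.erase i) (fun m => x m - c)) *
              ((x j - (x i - c))⁻¹ * ∏ m ∈ univ.erase j, (x j - x m)⁻¹)) :=
          Finset.sum_congr rfl fun j _ => hXj j
      _ = (lam i * lam i) * ∑ j,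
            (Polynomial.eval (x j) (Lagrange.nodal (univ.erase i) (fun m => x m - c)) *
              ((x j - (x i - c))⁻¹ * ∏ m ∈ univ.erase j, (x j - x m)⁻¹)) := by
          rw [Finset.mul_sum]
      _ = 1 := by
          have hsum : ∑ j,
              (Polynomial.eval (x j) (Lagrange.nodal (univ.erase i) (fun m => x m - c)) *
                ((x j - (x i - c))⁻¹ * ∏ m ∈ univ.erase j, (x j - x m)⁻¹))
              = -(Polynomial.eval (x i - c) (Lagrange.nodal (univ.erase i) (fun m => x m - c)) *
                ∏ m : Fin n, ((x i - c) - x m)⁻¹) := by linarith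
          rw [hsum]
          linear_combination -hE
  · rw [if_neg hik]
    have hik' : x i - c ≠ x k - c := fun h => hik (hxinj (sub_left_inj.mp h))
    have hmem1 : ∀ (t : Finset (Fin n)), x i - c ∉ insert (x k - c) (t.image x) := by
      intro t
      simp only [Finset.mem_insert]
      push_neg
      exact ⟨hik', hnotmem i t⟩
    have hcard : (insert (x i - c) (insert (x k - c) (univ.image x))).card = n + 2 := by
      rw [card_insert_of_notMem (hmem1 univ), card_insert_of_notMem (hnotmem k univ),
        Finset.card_image_of_injOn (himginj univ), card_univ, Fintype.card_fin]
    have hdeg : (Lagrange.nodal univ (fun m => x m - c)).degree <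
        (insert (x i - c) (insert (x k - c) (univ.image x))).card := by
      rw [Lagrange.degree_nodal, hcard]
      have h1 : (univ : Finset (Fin n)).card < n + 2 := by
        rw [card_univ, Fintype.card_fin]; omega
      exact_mod_cast h1
    have hkey := key_sum_eval (insert (x i - c) (insert (x k - c) (univ.image x))) id
      (Set.injOn_id _) (Lagrange.nodal univ (fun m => x m - c)) hdeg
    have hcoeff : (Lagrange.nodal univ (fun m => x m - c)).coeff
        ((insert (x i - c) (insert (x k - c) (univ.image x))).card - 1) = 0 := by
      apply Polynomial.coeff_eq_zero_of_natDegree_lt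
      rw [Lagrange.natDegree_nodal, hcard, card_univ, Fintype.card_fin]
      omega
    rw [hcoeff] at hkey
    simp only [id_eq] at hkey
    rw [Finset.sum_insert (hmem1 univ), Finset.sum_insert (hnotmem k univ),
      Finset.sum_image (himginj univ),
      show Polynomial.eval (x i - c) (Lagrange.nodal univ (fun m => x m - c)) = 0 by
        simpa using Lagrange.eval_nodal_at_node (v := fun m => x m - c) (Finset.mem_univ i),
      show Polynomial.eval (x k - c) (Lagrange.nodal univ (fun m => x m - c)) = 0 by
        simpa using Lagrange.eval_nodal_at_node (v := fun m => x m - c) (Finset.mem_univ k),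
      zero_mul, zero_mul, zero_add, zero_add] at hkey
    have hstep : ∀ j : Fin n,
        Polynomial.eval (x j) (Lagrange.nodal univ (fun m => x m - c)) *
          ∏ u ∈ (insert (x i - c) (insert (x k - c) (univ.image x))).erase (x j), (x j - u)⁻¹
        = Polynomial.eval (x j) (Lagrange.nodal univ (fun m => x m - c)) *
          ((x j - (x i - c))⁻¹ * ((x j - (x k - c))⁻¹ * ∏ m ∈ univ.erase j, (x j - x m)⁻¹)) := by
      intro j
      congr 1
      rw [Finset.erase_insert_of_ne (fun h => hTnm i j h.symm),
          Finset.erase_insert_of_ne (fun h => hTnm k j h.symm),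
          ← Finset.image_erase hxinj,
          Finset.prod_insert (hmem1 (univ.erase j)),
          Finset.prod_insert (hnotmem k (univ.erase j)),
          Finset.prod_image (himginj (univ.erase j))]
    rw [Finset.sum_congr rfl (fun j _ => hstep j)] at hkey
    have hXj : ∀ j : Fin n, X i j * X k j = (lam i * lam k) *
        (Polynomial.eval (x j) (Lagrange.nodal univ (fun m => x m - c)) *
          ((x j - (x i - c))⁻¹ * ((x j - (x k - c))⁻¹ * ∏ m ∈ univ.erase j, (x j - x m)⁻¹))) := by
      intro j
      have hA : Polynomial.eval (x j) (Lagrange.nodal univ (fun m => x m - c))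
          = c * ∏ m ∈ univ.erase j, (x j - x m + c) := by
        rw [Lagrange.eval_nodal]
        have e1 : ∏ m : Fin n, (x j - (x m - c)) = ∏ m : Fin n, (x j - x m + c) :=
          Finset.prod_congr rfl fun m _ => by ring
        rw [e1, ← Finset.mul_prod_erase univ (fun m => x j - x m + c) (Finset.mem_univ j)]
        congr 1
        ring
      have hψψ : ψ j * ψ j = (c * ∏ m ∈ univ.erase j, (x j - x m + c)) *
          (∏ m ∈ univ.erase j, (x j - x m))⁻¹ := by
        rw [hψ2 j, Finset.prod_div_distrib, div_eq_mul_inv]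
        ring
      have hd1 : x j - (x i - c) = x j - x i + c := by ring
      have hd2 : x j - (x k - c) = x j - x k + c := by ring
      calc X i j * X k j
          = (lam i * lam k) * ((ψ j * ψ j) * ((x j - x i + c)⁻¹ * (x j - x k + c)⁻¹)) := by
            rw [hX, hX]; ring
        _ = _ := by
            rw [hψψ, hA, hd1, hd2, Finset.prod_inv_distrib]; ring
    calc ∑ j, X i j * X k j
        = ∑ j, (lam i * lam k) *
            (Polynomial.eval (x j) (Lagrange.nodal univ (fun m => x m - c)) *
              ((x j - (x i - c))⁻¹ * ((x j - (x k - c))⁻¹ * ∏ m ∈ univ.erase j, (x j - x m)⁻¹))) :=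
          Finset.sum_congr rfl fun j _ => hXj j
      _ = (lam i * lam k) * ∑ j,
            (Polynomial.eval (x j) (Lagrange.nodal univ (fun m => x m - c)) *
              ((x j - (x i - c))⁻¹ * ((x j - (x k - c))⁻¹ * ∏ m ∈ univ.erase j, (x j - x m)⁻¹))) := by
          rw [Finset.mul_sum]
      _ = 0 := by rw [hkey, mul_zero]
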